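/- (McCoy's lemma) Let A be a commutative ring, E an A-module, and f ∈ A[X₁,…,Xₖ] a polynomial. Then f is a regular element for the module E[X₁,…,Xₖ] (i.e. f·g = 0 implies g = 0 for g ∈ E[X₁,…,Xₖ]) if and only if the content ideal c(f) generated by the coefficients of f is E-regular. -/

import Mathlib

set_option maxHeartbeats 1000000
open MvPolynomial

open scoped MonomialOrder in
/-- Core combinatorial form of McCoy's lemma, for "polynomials with coefficients in `E`"
realized as finitely supported functions `(σ →₀ ℕ) →₀ E`. -/
private lemma mccoy_core {A : Type*} [CommRing A] {E : Type*} [AddCommGroup E] [Module A E]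
    {σ : Type*} [DecidableEq σ] (m : MonomialOrder σ) (f : MvPolynomial σ A)
    (hreg : ∀ x : E,
      (∀ y ∈ Ideal.span (Set.range fun d => MvPolynomial.coeff d f), y • x = 0) → x = 0) :
    ∀ D : (σ →₀ ℕ) →₀ E,
      (∀ d, ∑ p ∈ Finset.HasAntidiagonal.antidiagonal d, MvPolynomial.coeff p.1 f • D p.2 = 0) → D = 0 := by
  classical
  suffices H : ∀ (b : m.syn) (D : (σ →₀ ℕ) →₀ E),
      (∀ d, ∑ p ∈ Finset.HasAntidiagonal.antidiagonal d, MvPolynomial.coeff p.1 f • D p.2 = 0) →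
      D.support.sup m.toSyn ≤ b → D = 0 by
    intro D hD
    exact H _ D hD le_rfl
  intro b
  induction b using WellFoundedLT.induction with
  | ind b IH =>
  intro D hD hb
  by_contra hD0
  have hsupp : D.support.Nonempty := Finsupp.support_nonempty_iff.mpr hD0
  obtain ⟨dg, hdg, hdgmax⟩ := D.support.exists_max_image m.toSyn hsupp
  have hdgb : m.toSyn dg ≤ b := le_trans (Finset.le_sup hdg) hb
  -- inner induction: every coefficient of any f' with "f' • D = 0" kills `D dg`
  have inner : ∀ (n : ℕ) (f' : MvPolynomial σ A), f'.support.card ≤ n →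
      (∀ d, ∑ p ∈ Finset.HasAntidiagonal.antidiagonal d, MvPolynomial.coeff p.1 f' • D p.2 = 0) →
      ∀ d, MvPolynomial.coeff d f' • D dg = 0 := by
    intro n
    induction n with
    | zero =>
      intro f' hcard _ d
      have hf0 : f' = 0 := by
        rw [← MvPolynomial.support_eq_empty]
        exact Finset.card_eq_zero.mp (Nat.le_zero.mp hcard)
      simp [hf0]
    | succ n ih =>
      intro f' hcard hDf' d
      by_cases hf0 : f' = 0
      · simp [hf0]
      have hfs : f'.support.Nonempty := by
        rwa [Finset.nonempty_iff_ne_empty, Ne, MvPolynomial.support_eq_empty]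
      obtain ⟨df, hdf, hdfmax⟩ := f'.support.exists_max_image m.toSyn hfs
      set a := MvPolynomial.coeff df f' with ha
      -- Step 1 : the product of the two top coefficients vanishes
      have step1 : a • D dg = 0 := by
        have h0 := hDf' (df + dg)
        rw [Finset.sum_eq_single (df, dg)] at h0
        · exact h0
        · rintro ⟨d1, d2⟩ hmem hne
          by_cases h1 : MvPolynomial.coeff d1 f' = 0
          · simp [h1]
          by_cases h2 : D d2 = 0
          · simp [h2]
          exfalso
          have hd1 : d1 ∈ f'.support := by rwa [MvPolynomial.mem_support_iff]
          have hd2 : d2 ∈ D.support := by rwa [Finsupp.mem_support_iff]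
          have hsum : d1 + d2 = df + dg := Finset.HasAntidiagonal.mem_antidiagonal.mp hmem
          have h1' : m.toSyn d1 ≤ m.toSyn df := hdfmax d1 hd1
          have h2' : m.toSyn d2 ≤ m.toSyn dg := hdgmax d2 hd2
          have hsum' : m.toSyn d1 + m.toSyn d2 = m.toSyn df + m.toSyn dg := by
            rw [← map_add, ← map_add, hsum]
          have e1 : m.toSyn d1 = m.toSyn df := by
            rcases lt_or_eq_of_le h1' with hlt | he
            · exact absurd hsum' (ne_of_lt (add_lt_add_of_lt_of_le hlt h2'))
            · exact he
          have e1' : d1 = df := m.toSyn.injective e1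
          have e2' : d2 = dg := by
            have : df + d2 = df + dg := by rwa [e1'] at hsum
            exact add_left_cancel this
          exact hne (by rw [e1', e2'])
        · intro hnotmem
          simp at hnotmem
      -- Step 2 : `a • D = 0` by the outer induction hypothesis
      have step2 : a • D = 0 := by
        rcases eq_or_ne (a • D) 0 with h | h
        · exact h
        exfalso
        have hsub : (a • D).support ⊆ D.support := Finsupp.support_smul
        have hlt : ∀ d' ∈ (a • D).support, m.toSyn d' < m.toSyn dg := by
          intro d' hd'
          have hne : d' ≠ dg := by
            intro hEq
            subst hEq
            rw [Finsupp.mem_support_iff, Finsupp.smul_apply] at hd'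
            exact hd' step1
          exact lt_of_le_of_ne (hdgmax d' (hsub hd'))
            (fun hEq => hne (m.toSyn.injective hEq))
        have hbot : (⊥ : m.syn) < b := by
          obtain ⟨d0, hd0⟩ := Finsupp.support_nonempty_iff.mpr h
          exact lt_of_le_of_lt bot_le (lt_of_lt_of_le (hlt d0 hd0) hdgb)
        have hsuplt : (a • D).support.sup m.toSyn < b := by
          rw [Finset.sup_lt_iff hbot]
          intro d' hd'
          exact lt_of_lt_of_le (hlt d' hd') hdgb
        have key : ∀ d', ∑ p ∈ Finset.HasAntidiagonal.antidiagonal d',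
            MvPolynomial.coeff p.1 f • (a • D) p.2 = 0 := by
          intro d'
          have : ∑ p ∈ Finset.HasAntidiagonal.antidiagonal d', MvPolynomial.coeff p.1 f • (a • D) p.2
              = a • ∑ p ∈ Finset.HasAntidiagonal.antidiagonal d', MvPolynomial.coeff p.1 f • D p.2 := by
            rw [Finset.smul_sum]
            refine Finset.sum_congr rfl fun p _ => ?_
            rw [Finsupp.smul_apply, smul_comm]
          rw [this, hD d', smul_zero]
        exact h (IH _ hsuplt (a • D) key le_rfl)
      have step2' : ∀ e, a • D e = 0 := by
        intro e
        rw [← Finsupp.smul_apply, step2, Finsupp.coe_zero, Pi.zero_apply]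
      -- Step 3 : remove the top term from `f'` and induct
      set f'' := f' - MvPolynomial.monomial df a with hf''
      have hcoeff'' : ∀ e, MvPolynomial.coeff e f''
          = if e = df then 0 else MvPolynomial.coeff e f' := by
        intro e
        rw [hf'', MvPolynomial.coeff_sub, MvPolynomial.coeff_monomial]
        by_cases he : e = df
        · subst he; simp [ha]
        · simp [he, Ne.symm he]
      have hsub'' : f''.support ⊆ f'.support.erase df := by
        intro e he
        rw [MvPolynomial.mem_support_iff, hcoeff''] at he
        rw [Finset.mem_erase, MvPolynomial.mem_support_iff]
        split_ifs at he with h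
        · exact absurd rfl he
        · exact ⟨h, he⟩
      have hcard'' : f''.support.card ≤ n := by
        have h1 := Finset.card_le_card hsub''
        rw [Finset.card_erase_of_mem hdf] at h1
        omega
      have hDf'' : ∀ d', ∑ p ∈ Finset.HasAntidiagonal.antidiagonal d',
          MvPolynomial.coeff p.1 f'' • D p.2 = 0 := by
        intro d'
        rw [← hDf' d']
        refine Finset.sum_congr rfl fun p _ => ?_
        rw [hcoeff'']
        by_cases h : p.1 = df
        · rw [if_pos h, zero_smul, h, ← ha, step2' p.2]
        · rw [if_neg h]
      have hkill'' := ih f'' hcard'' hDf''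
      by_cases h : d = df
      · rw [h, ← ha]
        exact step2' dg
      · have : MvPolynomial.coeff d f' = MvPolynomial.coeff d f'' := by
          rw [hcoeff'', if_neg h]
        rw [this]
        exact hkill'' d
  -- conclude using E-regularity of the content
  have hkill : ∀ d, MvPolynomial.coeff d f • D dg = 0 := inner f.support.card f le_rfl hD
  have hx : D dg = 0 := by
    apply hreg
    have hle : Ideal.span (Set.range fun d => MvPolynomial.coeff d f)
        ≤ LinearMap.ker (LinearMap.toSpanSingleton A E (D dg)) := by
      rw [Ideal.span_le]
      rintro y ⟨d, rfl⟩
      simp only [SetLike.mem_coe, LinearMap.mem_ker, LinearMap.toSpanSingleton_apply]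
      exact hkill d
    intro y hy
    simpa [LinearMap.toSpanSingleton_apply] using hle hy
  exact (Finsupp.mem_support_iff.mp hdg) hx

open TensorProduct in
noncomputable def MvPolynomial.scalarRTensor {R N σ : Type*} [CommSemiring R] [AddCommMonoid N]
    [Module R N] [DecidableEq σ] : MvPolynomial σ R ⊗[R] N ≃ₗ[R] (σ →₀ ℕ) →₀ N :=
  TensorProduct.congr (AddMonoidAlgebra.coeffLinearEquiv R) (LinearEquiv.refl R N) ≪≫ₗ
    TensorProduct.finsuppScalarLeft R N (σ →₀ ℕ)

open TensorProduct in
theorem MvPolynomial.scalarRTensor_apply_tmul_apply {R N σ : Type*} [CommSemiring R]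
    [AddCommMonoid N] [Module R N] [DecidableEq σ] (p : MvPolynomial σ R) (n : N) (d : σ →₀ ℕ) :
    MvPolynomial.scalarRTensor (p ⊗ₜ[R] n) d = MvPolynomial.coeff d p • n := by
  simp [MvPolynomial.scalarRTensor]
  rfl

open TensorProduct in
private lemma mccoy_key {A : Type*} [CommRing A] {E : Type*} [AddCommGroup E] [Module A E]
    {σ : Type*} [DecidableEq σ] (f : MvPolynomial σ A) (t : MvPolynomial σ A ⊗[A] E)
    (d : σ →₀ ℕ) :
    MvPolynomial.scalarRTensor (f • t) d
      = ∑ p ∈ Finset.HasAntidiagonal.antidiagonal d,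
          MvPolynomial.coeff p.1 f • MvPolynomial.scalarRTensor t p.2 := by
  induction t using TensorProduct.induction_on with
  | zero => simp
  | tmul p x =>
    rw [smul_tmul', smul_eq_mul, MvPolynomial.scalarRTensor_apply_tmul_apply,
      MvPolynomial.coeff_mul, Finset.sum_smul]
    refine Finset.sum_congr rfl fun p' _ => ?_
    rw [MvPolynomial.scalarRTensor_apply_tmul_apply, mul_smul]
  | add t1 t2 h1 h2 =>
    rw [smul_add, map_add, Finsupp.add_apply, h1, h2, ← Finset.sum_add_distrib]
    refine Finset.sum_congr rfl fun p _ => ?_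
    rw [map_add, Finsupp.add_apply, smul_add]

open TensorProduct in
/-- McCoy's lemma: `f ∈ A[X₁,…,Xₖ]` is a regular element for `E[X₁,…,Xₖ]`
(realized as `A[X₁,…,Xₖ] ⊗[A] E`) iff its content ideal is `E`-regular. -/
theorem stmt4 {A : Type*} [CommRing A] {E : Type*} [AddCommGroup E] [Module A E]
    {k : ℕ} (f : MvPolynomial (Fin k) A) :
    (∀ g : MvPolynomial (Fin k) A ⊗[A] E, f • g = 0 → g = 0) ↔
      (∀ x : E,
        (∀ y ∈ Ideal.span (Set.range fun m => MvPolynomial.coeff m f), y • x = 0) → x = 0) := by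
  classical
  constructor
  · intro h x hx
    have h1 : f • ((1 : MvPolynomial (Fin k) A) ⊗ₜ[A] x) = 0 := by
      rw [smul_tmul', smul_eq_mul, mul_one]
      rw [← LinearEquiv.map_eq_zero_iff (MvPolynomial.scalarRTensor (R := A))]
      ext d
      rw [MvPolynomial.scalarRTensor_apply_tmul_apply, Finsupp.coe_zero, Pi.zero_apply]
      exact hx _ (Ideal.subset_span ⟨d, rfl⟩)
    have h2 := h _ h1
    have h3 := congrArg (fun t => MvPolynomial.scalarRTensor (R := A) t 0) h2
    simpa [MvPolynomial.scalarRTensor_apply_tmul_apply] using h3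
  · intro hreg g hg
    have hD : ∀ d, ∑ p ∈ Finset.HasAntidiagonal.antidiagonal d,
        MvPolynomial.coeff p.1 f • MvPolynomial.scalarRTensor g p.2 = 0 := by
      intro d
      rw [← mccoy_key f g d, hg, map_zero, Finsupp.coe_zero, Pi.zero_apply]
    have h0 : MvPolynomial.scalarRTensor g = 0 :=
      mccoy_core (MonomialOrder.lex (σ := Fin k)) f hreg _ hD
    exact (LinearEquiv.map_eq_zero_iff _).mp h0
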